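/- If Q₀, ..., Q_k are (chains of) projectors on ℝ^m such that each Q_i projects onto a subspace N_i with (N₀ ⊕ ⋯ ⊕ N_{i-1}) ∩ N_i = {0} and Q_i Q_j = 0 for all 0 ≤ j < i, then setting P_i = I − Q_i and Π_k = P₀ P₁ ⋯ P_k, the kernel of Π_k equals the (internal) direct sum N₀ ⊕ N₁ ⊕ ⋯ ⊕ N_k. -/

import Mathlib

noncomputable def piProd {m : ℕ} (Q : ℕ → Module.End ℝ (Fin m → ℝ)) (k : ℕ) :
    Module.End ℝ (Fin m → ℝ) :=
  ((List.range (k + 1)).map (fun i => 1 - Q i)).prod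

/-- `Π_{k-1}` with the convention `Π_{-1} = 1`. -/
noncomputable def piPred {m : ℕ} (Q : ℕ → Module.End ℝ (Fin m → ℝ)) (k : ℕ) :
    Module.End ℝ (Fin m → ℝ) :=
  if k = 0 then 1 else piProd Q (k - 1)

/-- `M_k = Π_{k-1} - Π_k`. -/
noncomputable def Mdiff {m : ℕ} (Q : ℕ → Module.End ℝ (Fin m → ℝ)) (k : ℕ) :
    Module.End ℝ (Fin m → ℝ) :=
  piPred Q k - piProd Q k

/-- ascending product `P_a * P_(a+1) * ... * P_b` (empty product `1` if `b < a`). -/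
noncomputable def ascProd {m : ℕ} (Q : ℕ → Module.End ℝ (Fin m → ℝ)) (a b : ℕ) :
    Module.End ℝ (Fin m → ℝ) :=
  ((List.range (b + 1 - a)).map (fun t => 1 - Q (a + t))).prod

/-- descending product `P_hi * P_(hi-1) * ... * P_lo`. -/
noncomputable def descProd {m : ℕ} (Q : ℕ → Module.End ℝ (Fin m → ℝ)) (hi lo : ℕ) :
    Module.End ℝ (Fin m → ℝ) :=
  ((List.range (hi + 1 - lo)).map (fun t => 1 - Q (hi - t))).prod


lemma piProd_succ {m : ℕ} (Q : ℕ → Module.End ℝ (Fin m → ℝ)) (k : ℕ) :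
    piProd Q (k + 1) = piProd Q k * (1 - Q (k + 1)) := by
  simp [piProd, List.range_succ, mul_assoc]

lemma piProd_mul_Q {m : ℕ} (Q : ℕ → Module.End ℝ (Fin m → ℝ)) (k : ℕ)
    (hidem : ∀ i ≤ k, Q i * Q i = Q i)
    (hadm : ∀ i ≤ k, ∀ j < i, Q i * Q j = 0) :
    ∀ j ≤ k, piProd Q k * Q j = 0 := by
  induction k with
  | zero =>
    intro j hj
    interval_cases j
    have h0 : piProd Q 0 = 1 - Q 0 := by simp [piProd, List.range_succ]
    rw [h0, sub_mul, one_mul, hidem 0 le_rfl, sub_self]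
  | succ k ih =>
    intro j hj
    rw [piProd_succ, mul_assoc]
    rcases Nat.eq_or_lt_of_le hj with h | h
    · have : (1 - Q (k + 1)) * Q j = 0 := by
        rw [sub_mul, one_mul, h, hidem (k+1) le_rfl, sub_self]
      rw [this, mul_zero]
    · have hj' : j ≤ k := Nat.lt_succ_iff.mp h
      have : (1 - Q (k + 1)) * Q j = Q j := by
        rw [sub_mul, one_mul, hadm (k+1) le_rfl j h, sub_zero]
      rw [this]
      exact ih (fun i hi => hidem i (Nat.le_succ_of_le hi))
        (fun i hi => hadm i (Nat.le_succ_of_le hi)) j hj'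

theorem kernel_of_Pi_eq_directSum {m : ℕ} (k : ℕ)
    (Q : ℕ → Module.End ℝ (Fin m → ℝ))
    (hidem : ∀ i ≤ k, Q i * Q i = Q i)
    (hind : ∀ i ≤ k,
      (⨆ j ∈ Finset.range i, LinearMap.range (Q j)) ⊓ LinearMap.range (Q i) = ⊥)
    (hadm : ∀ i ≤ k, ∀ j < i, Q i * Q j = 0) :
    LinearMap.ker (piProd Q k) = ⨆ i ∈ Finset.range (k + 1), LinearMap.range (Q i) := by
  induction k with
  | zero =>
    have h0 : piProd Q 0 = 1 - Q 0 := by simp [piProd, List.range_succ]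
    have hr : (⨆ i ∈ Finset.range (0 + 1), LinearMap.range (Q i)) = LinearMap.range (Q 0) := by
      simp
    rw [h0, hr]
    ext x
    simp only [LinearMap.mem_ker, LinearMap.sub_apply, Module.End.one_apply, sub_eq_zero]
    constructor
    · intro h
      exact ⟨x, h.symm⟩
    · rintro ⟨y, rfl⟩
      have hq := hidem 0 le_rfl
      calc Q 0 y = (Q 0 * Q 0) y := by rw [hq]
        _ = Q 0 (Q 0 y) := rfl
  | succ k ih =>
    apply le_antisymm
    · intro x hx
      rw [LinearMap.mem_ker, piProd_succ, Module.End.mul_apply] at hx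
      have h1 : (1 - Q (k + 1)) x ∈ ⨆ i ∈ Finset.range (k + 1), LinearMap.range (Q i) := by
        rw [← ih (fun i hi => hidem i (Nat.le_succ_of_le hi))
          (fun i hi => hind i (Nat.le_succ_of_le hi))
          (fun i hi => hadm i (Nat.le_succ_of_le hi))]
        exact hx
      have h1' : (1 - Q (k + 1)) x ∈ ⨆ i ∈ Finset.range (k + 2), LinearMap.range (Q i) := by
        have hle : (⨆ i ∈ Finset.range (k + 1), LinearMap.range (Q i)) ≤
            ⨆ i ∈ Finset.range (k + 2), LinearMap.range (Q i) :=
          biSup_mono fun i hi =>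
            Finset.mem_range.mpr (Nat.lt_succ_of_lt (Finset.mem_range.mp hi))
        exact hle h1
      have h2 : Q (k + 1) x ∈ ⨆ i ∈ Finset.range (k + 2), LinearMap.range (Q i) := by
        apply Submodule.mem_iSup_of_mem (k + 1)
        apply Submodule.mem_iSup_of_mem (Finset.mem_range.mpr (Nat.lt_succ_self _))
        exact ⟨x, rfl⟩
      have hsum := Submodule.add_mem _ h1' h2
      rw [LinearMap.sub_apply, Module.End.one_apply, sub_add_cancel] at hsum
      exact hsum
    · apply iSup₂_le
      intro i hi
      rintro x ⟨y, rfl⟩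
      rw [LinearMap.mem_ker, ← Module.End.mul_apply,
        piProd_mul_Q Q (k + 1) hidem hadm i (Nat.lt_succ_iff.mp (Finset.mem_range.mp hi))]
      rfl
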